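/- For any random walk on a finite tree T with m edges generated by an edge-weight function with asymmetry τ, the maximum hitting time satisfies H(T) ≤ F(τ, m), where F(t,m) = Σ_{k=0}^{m−1} c_k t^k with c_0 = m and c_k = 2(m−k) for 1 ≤ k ≤ m−1. -/

import Mathlib

set_option linter.unusedSectionVars false
namespace TreeHit

open SimpleGraph Finset Walk

variable {V : Type*} [Fintype V] [DecidableEq V] {T : SimpleGraph V} [DecidableRel T.Adj]

noncomputable def pathTo (ht : T.IsTree) (a z : V) : T.Walk z a :=
  (ht.existsUnique_path z a).choose

lemma pathTo_isPath (ht : T.IsTree) (a z : V) : (pathTo ht a z).IsPath :=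
  (ht.existsUnique_path z a).choose_spec.1

lemma pathTo_unique (ht : T.IsTree) {a z : V} (p : T.Walk z a) (hp : p.IsPath) :
    p = pathTo ht a z :=
  (ht.existsUnique_path z a).choose_spec.2 p hp

noncomputable def depth (ht : T.IsTree) (a z : V) : ℕ := (pathTo ht a z).length

lemma pathTo_self (ht : T.IsTree) (a : V) : pathTo ht a a = Walk.nil :=
  (pathTo_unique ht Walk.nil IsPath.nil).symm

lemma depth_self (ht : T.IsTree) (a : V) : depth ht a a = 0 := by
  simp [depth, pathTo_self]

lemma eq_of_depth_eq_zero (ht : T.IsTree) {a z : V} (h : depth ht a z = 0) : z = a :=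
  Walk.eq_of_length_eq_zero h

lemma exists_parent (ht : T.IsTree) {a z : V} (hz : z ≠ a) :
    ∃ (y : V) (h : T.Adj z y), pathTo ht a z = Walk.cons h (pathTo ht a y) := by
  have hnil : ¬ (pathTo ht a z).Nil := Walk.not_nil_of_ne hz
  obtain ⟨y, h, q, hq⟩ := Walk.not_nil_iff.mp hnil
  refine ⟨y, h, ?_⟩
  have hp : q.IsPath := by
    have := pathTo_isPath ht a z
    rw [hq] at this
    exact this.of_cons
  rw [hq, pathTo_unique ht q hp]

lemma depth_parent (ht : T.IsTree) {a z y : V} (h : T.Adj z y)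
    (e : pathTo ht a z = Walk.cons h (pathTo ht a y)) :
    depth ht a z = depth ht a y + 1 := by
  simp [depth, e]

lemma parent_unique (ht : T.IsTree) {a z y y' : V} (h : T.Adj z y) (h' : T.Adj z y')
    (e : pathTo ht a z = Walk.cons h (pathTo ht a y))
    (e' : pathTo ht a z = Walk.cons h' (pathTo ht a y')) : y = y' := by
  have hs := congrArg Walk.support (e.symm.trans e')
  rw [Walk.support_cons, Walk.support_cons, (pathTo ht a y).support_eq_cons,
    (pathTo ht a y').support_eq_cons] at hs
  injection hs with _ hs2
  injection hs2

lemma depth_le_of_mem_support_aux (ht : T.IsTree) (a : V) :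
    ∀ (N : ℕ) (z : V), depth ht a z ≤ N →
      ∀ u ∈ (pathTo ht a z).support, depth ht a u ≤ depth ht a z := by
  intro N
  induction N with
  | zero =>
    intro z hz u hu
    have hza := eq_of_depth_eq_zero ht (Nat.le_zero.mp hz)
    subst hza
    rw [pathTo_self] at hu
    simp at hu
    subst hu; rfl
  | succ N ih =>
    intro z hz u hu
    by_cases hza : z = a
    · subst hza
      rw [pathTo_self] at hu
      simp at hu
      subst hu; rfl
    · obtain ⟨y, h, e⟩ := exists_parent ht hza
      have hd := depth_parent ht h e
      rw [e, Walk.support_cons] at hu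
      rcases List.mem_cons.mp hu with rfl | hu
      · rfl
      · have := ih y (by omega) u hu
        omega

lemma depth_le_of_mem_support (ht : T.IsTree) (a : V) (z : V) :
    ∀ u ∈ (pathTo ht a z).support, depth ht a u ≤ depth ht a z :=
  depth_le_of_mem_support_aux ht a (depth ht a z) z le_rfl

lemma depth_inj_on_support_aux (ht : T.IsTree) (a : V) :
    ∀ (N : ℕ) (z : V), depth ht a z ≤ N →
      ∀ u u', u ∈ (pathTo ht a z).support → u' ∈ (pathTo ht a z).support →
      depth ht a u = depth ht a u' → u = u' := by
  intro N
  induction N with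
  | zero =>
    intro z hz u u' hu hu' hd
    have hza := eq_of_depth_eq_zero ht (Nat.le_zero.mp hz)
    subst hza
    rw [pathTo_self] at hu hu'
    simp at hu hu'
    subst hu; subst hu'; rfl
  | succ N ih =>
    intro z hz u u' hu hu' hd
    by_cases hza : z = a
    · subst hza
      rw [pathTo_self] at hu hu'
      simp at hu hu'
      subst hu; subst hu'; rfl
    · obtain ⟨y, h, e⟩ := exists_parent ht hza
      have hdp := depth_parent ht h e
      rw [e, Walk.support_cons] at hu hu'
      rcases List.mem_cons.mp hu with h1 | h1 <;> rcases List.mem_cons.mp hu' with h2 | h2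
      · rw [h1, h2]
      · exfalso
        have e1 : depth ht a u = depth ht a z := by rw [h1]
        have := depth_le_of_mem_support ht a y u' h2
        omega
      · exfalso
        have e1 : depth ht a u' = depth ht a z := by rw [h2]
        have := depth_le_of_mem_support ht a y u h1
        omega
      · exact ih y (by omega) u u' h1 h2 hd

lemma depth_inj_on_support (ht : T.IsTree) (a : V) (z : V) :
    ∀ u u', u ∈ (pathTo ht a z).support → u' ∈ (pathTo ht a z).support →
      depth ht a u = depth ht a u' → u = u' :=
  depth_inj_on_support_aux ht a (depth ht a z) z le_rfl

lemma adj_parent (ht : T.IsTree) (a : V) {z y : V} (h : T.Adj z y) :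
    pathTo ht a z = Walk.cons h (pathTo ht a y) ∨
      pathTo ht a y = Walk.cons h.symm (pathTo ht a z) := by
  by_cases hz : z ∈ (pathTo ht a y).support
  · right
    have h1 : ((pathTo ht a y).takeUntil z hz).IsPath := (pathTo_isPath ht a y).takeUntil hz
    have h2 : (Walk.cons h.symm (Walk.nil : T.Walk z z)).IsPath := by
      simp [Walk.cons_isPath_iff, h.ne']
    have ht1 : ((pathTo ht a y).takeUntil z hz) = Walk.cons h.symm Walk.nil :=
      (ht.existsUnique_path y z).unique h1 h2
    have hspec := (pathTo ht a y).take_spec hz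
    have hd : ((pathTo ht a y).dropUntil z hz) = pathTo ht a z :=
      pathTo_unique ht _ ((pathTo_isPath ht a y).dropUntil hz)
    rw [ht1, hd] at hspec
    simpa using hspec.symm
  · left
    exact (pathTo_unique ht _ ((pathTo_isPath ht a y).cons hz)).symm

lemma adj_depth (ht : T.IsTree) (a : V) {z y : V} (h : T.Adj z y) :
    depth ht a z = depth ht a y + 1 ∨ depth ht a y = depth ht a z + 1 := by
  rcases adj_parent ht a h with e | e
  · exact Or.inl (depth_parent ht h e)
  · exact Or.inr (depth_parent ht h.symm e)

/-- Vertices whose path to `a` passes through `u`. -/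
noncomputable def cutSet (ht : T.IsTree) (a u : V) : Finset V :=
  Finset.univ.filter (fun z => u ∈ (pathTo ht a z).support)

lemma mem_cutSet (ht : T.IsTree) (a u z : V) :
    z ∈ cutSet ht a u ↔ u ∈ (pathTo ht a z).support := by
  simp [cutSet]

lemma self_mem_cutSet (ht : T.IsTree) (a u : V) : u ∈ cutSet ht a u := by
  simp [mem_cutSet, Walk.start_mem_support]

lemma depth_le_of_mem_cutSet (ht : T.IsTree) {a u z : V} (h : z ∈ cutSet ht a u) :
    depth ht a u ≤ depth ht a z :=
  depth_le_of_mem_support ht a z u ((mem_cutSet ht a u z).mp h)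

lemma eq_of_mem_cutSet_depth_eq (ht : T.IsTree) {a u z : V} (h : z ∈ cutSet ht a u)
    (hd : depth ht a u = depth ht a z) : z = u :=
  depth_inj_on_support ht a z z u (Walk.start_mem_support _) ((mem_cutSet ht a u z).mp h) hd.symm

lemma ne_a_of_mem_cutSet (ht : T.IsTree) {a u z : V} (hu : u ≠ a) (h : z ∈ cutSet ht a u) :
    z ≠ a := by
  rintro rfl
  rw [mem_cutSet, pathTo_self] at h
  simp at h
  exact hu h

lemma parent_mem_cutSet (ht : T.IsTree) {a u z y : V} (h : T.Adj z y)
    (e : pathTo ht a z = Walk.cons h (pathTo ht a y))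
    (hz : z ∈ cutSet ht a u) (hzu : z ≠ u) : y ∈ cutSet ht a u := by
  rw [mem_cutSet] at hz ⊢
  rw [e, Walk.support_cons] at hz
  rcases List.mem_cons.mp hz with h1 | h1
  · exact absurd h1.symm hzu
  · exact h1

/-- crossing: an adjacency from inside the cut set to outside must be the edge `(u, parent u)`. -/
lemma crossing (ht : T.IsTree) {a u v z y : V} (huv : T.Adj u v)
    (eu : pathTo ht a u = Walk.cons huv (pathTo ht a v))
    (hz : z ∈ cutSet ht a u) (hy : y ∉ cutSet ht a u) (hadj : T.Adj z y) :
    z = u ∧ y = v := by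
  rcases adj_parent ht a hadj with e | e
  · -- y is the parent of z
    by_cases hzu : z = u
    · subst hzu
      exact ⟨rfl, parent_unique ht hadj huv e eu⟩
    · exact absurd (parent_mem_cutSet ht hadj e hz hzu) hy
  · -- z is the parent of y
    exfalso
    apply hy
    rw [mem_cutSet] at hz ⊢
    rw [e, Walk.support_cons]
    exact List.mem_cons_of_mem _ hz

lemma v_not_mem_cutSet (ht : T.IsTree) {a u v : V} (huv : T.Adj u v)
    (eu : pathTo ht a u = Walk.cons huv (pathTo ht a v)) :
    v ∉ cutSet ht a u := by
  intro hv
  have h1 := depth_le_of_mem_cutSet ht hv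
  have h2 := depth_parent ht huv eu
  omega

lemma a_not_mem_cutSet (ht : T.IsTree) {a u : V} (hu : u ≠ a) : a ∉ cutSet ht a u := by
  intro h
  exact ne_a_of_mem_cutSet ht hu h rfl

/-- every dart of a path to `a` goes from child to parent. -/
lemma darts_parent_aux (ht : T.IsTree) (a : V) :
    ∀ (N : ℕ) (z : V), depth ht a z ≤ N → ∀ d ∈ (pathTo ht a z).darts,
      pathTo ht a d.fst = Walk.cons d.adj (pathTo ht a d.snd) := by
  intro N
  induction N with
  | zero =>
    intro z hz d hd
    have hza := eq_of_depth_eq_zero ht (Nat.le_zero.mp hz)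
    subst hza
    rw [pathTo_self] at hd
    simp at hd
  | succ N ih =>
    intro z hz d hd
    by_cases hza : z = a
    · subst hza
      rw [pathTo_self] at hd
      simp at hd
    · obtain ⟨y, h, e⟩ := exists_parent ht hza
      have hdp := depth_parent ht h e
      rw [e, Walk.darts_cons] at hd
      rcases List.mem_cons.mp hd with h1 | h1
      · subst h1
        exact e
      · exact ih y (by omega) d h1

lemma darts_parent (ht : T.IsTree) (a z : V) :
    ∀ d ∈ (pathTo ht a z).darts,
      pathTo ht a d.fst = Walk.cons d.adj (pathTo ht a d.snd) :=
  darts_parent_aux ht a (depth ht a z) z le_rfl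

lemma dart_eq_of_fst_eq (ht : T.IsTree) (a z : V) {d d' : T.Dart}
    (hd : d ∈ (pathTo ht a z).darts) (hd' : d' ∈ (pathTo ht a z).darts)
    (h : d.fst = d'.fst) : d = d' := by
  rcases d with ⟨⟨x1, x2⟩, hadj⟩
  rcases d' with ⟨⟨y1, y2⟩, hadj'⟩
  obtain rfl : x1 = y1 := h
  have e1 := darts_parent ht a z _ hd
  have e2 := darts_parent ht a z _ hd'
  have := parent_unique ht hadj hadj' e1 e2
  subst this
  rfl

lemma depth_getVert_aux (ht : T.IsTree) (a : V) :
    ∀ (N : ℕ) (z : V), depth ht a z ≤ N → ∀ i ≤ depth ht a z,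
      depth ht a ((pathTo ht a z).getVert i) = depth ht a z - i := by
  intro N
  induction N with
  | zero =>
    intro z hz i hi
    have hi0 : i = 0 := by omega
    subst hi0
    simp [Walk.getVert_zero]
  | succ N ih =>
    intro z hz i hi
    match i with
    | 0 => simp [Walk.getVert_zero]
    | (i + 1) =>
      have hza : z ≠ a := by
        intro hza; subst hza; rw [depth_self] at hi; omega
      obtain ⟨y, h, e⟩ := exists_parent ht hza
      have hdp := depth_parent ht h e
      rw [e, Walk.getVert_cons_succ]
      have := ih y (by omega) i (by omega)
      rw [this]
      omega

lemma depth_getVert (ht : T.IsTree) (a z : V) {i : ℕ} (hi : i ≤ depth ht a z) :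
    depth ht a ((pathTo ht a z).getVert i) = depth ht a z - i :=
  depth_getVert_aux ht a (depth ht a z) z le_rfl i hi

/-- minimal depth of an endpoint of an edge. -/
noncomputable def minD (ht : T.IsTree) (a : V) (e : Sym2 V) : ℕ :=
  Sym2.lift ⟨fun p q => min (depth ht a p) (depth ht a q),
    fun p q => min_comm _ _⟩ e

lemma minD_mk (ht : T.IsTree) (a p q : V) :
    minD ht a s(p, q) = min (depth ht a p) (depth ht a q) := rfl

lemma depth_le_card_edgeFinset (ht : T.IsTree) (a z : V) :
    depth ht a z ≤ T.edgeFinset.card := by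
  classical
  have hnd : (pathTo ht a z).edges.Nodup := (pathTo_isPath ht a z).isTrail.edges_nodup
  have hlen : (pathTo ht a z).edges.toFinset.card = depth ht a z := by
    rw [List.toFinset_card_of_nodup hnd, Walk.length_edges]
    rfl
  have hsub : (pathTo ht a z).edges.toFinset ⊆ T.edgeFinset := by
    intro e he
    rw [List.mem_toFinset] at he
    exact mem_edgeFinset.mpr ((pathTo ht a z).edges_subset_edgeSet he)
  rw [← hlen]
  exact Finset.card_le_card hsub

/-- there are at most `m - k` edges both of whose endpoints have depth at least `k`. -/
lemma card_filter_minD (ht : T.IsTree) (a : V) (k : ℕ)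
    (hne : (T.edgeFinset.filter (fun e => k ≤ minD ht a e)).Nonempty) :
    (T.edgeFinset.filter (fun e => k ≤ minD ht a e)).card + k ≤ T.edgeFinset.card := by
  classical
  obtain ⟨e0, he0⟩ := hne
  rw [Finset.mem_filter] at he0
  obtain ⟨z, hz⟩ : ∃ z, k ≤ depth ht a z := by
    induction e0 using Sym2.ind with
    | _ p q =>
      refine ⟨p, ?_⟩
      have := he0.2
      rw [minD_mk] at this
      omega
  set P := pathTo ht a z with hP
  set D := depth ht a z with hD
  set t : Finset (Sym2 V) :=
    (Finset.range k).image (fun j => s(P.getVert (D - 1 - j), P.getVert (D - j))) with hts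
  have hmind : ∀ j < k, minD ht a s(P.getVert (D - 1 - j), P.getVert (D - j)) = j := by
    intro j hj
    rw [minD_mk, depth_getVert ht a z (by omega), depth_getVert ht a z (by omega)]
    omega
  have hPlen : P.length = D := rfl
  have htsub : t ⊆ T.edgeFinset := by
    intro e he
    rw [hts, Finset.mem_image] at he
    obtain ⟨j, hj, rfl⟩ := he
    rw [Finset.mem_range] at hj
    rw [mem_edgeFinset]
    have hadj : T.Adj (P.getVert (D - 1 - j)) (P.getVert (D - 1 - j + 1)) :=
      P.adj_getVert_succ (by omega)
    have : D - 1 - j + 1 = D - j := by omega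
    rw [this] at hadj
    exact hadj
  have hcard_t : t.card = k := by
    rw [hts, Finset.card_image_of_injOn, Finset.card_range]
    intro i hi j hj hij
    simp only at hij
    rw [Finset.mem_coe, Finset.mem_range] at hi hj
    have h1 := hmind i hi
    have h2 := hmind j hj
    rw [hij, h2] at h1
    omega
  have hdisj : Disjoint (T.edgeFinset.filter (fun e => k ≤ minD ht a e)) t := by
    rw [Finset.disjoint_left]
    intro e he het
    rw [Finset.mem_filter] at he
    rw [hts, Finset.mem_image] at het
    obtain ⟨j, hj, rfl⟩ := het
    rw [Finset.mem_range] at hj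
    have := hmind j hj
    omega
  calc (T.edgeFinset.filter (fun e => k ≤ minD ht a e)).card + k
      = ((T.edgeFinset.filter (fun e => k ≤ minD ht a e)) ∪ t).card := by
        rw [Finset.card_union_of_disjoint hdisj, hcard_t]
    _ ≤ T.edgeFinset.card := Finset.card_le_card (Finset.union_subset
        (Finset.filter_subset _ _) htsub)

lemma telescope (Hf : V → ℝ) {x y : V} (p : T.Walk x y) :
    ((p.darts).map (fun d => Hf d.fst - Hf d.snd)).sum = Hf x - Hf y := by
  induction p with
  | nil => simp
  | cons h p ih => simp [ih]

lemma cut_identity (ht : T.IsTree) {a : V} (w : V → V → ℝ) (Hf : V → ℝ)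
    (hH : ∀ x, x ≠ a → (∑ y, w x y) * Hf x = (∑ y, w x y) + ∑ y, w x y * Hf y)
    (hw_symm : ∀ x y, w x y = w y x)
    (hw_zero : ∀ x y, ¬ T.Adj x y → w x y = 0)
    {u v : V} (huv : T.Adj u v)
    (eu : pathTo ht a u = Walk.cons huv (pathTo ht a v)) :
    w u v * (Hf u - Hf v) =
      w u v + ∑ z ∈ cutSet ht a u, ∑ y ∈ cutSet ht a u, w z y := by
  classical
  set S := cutSet ht a u with hS
  have hu_ne_a : u ≠ a := by
    intro h
    have := depth_parent ht huv eu
    rw [h, depth_self] at this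
    omega
  have key : ∀ z ∈ S, ∑ y, w z y * (Hf z - Hf y) = ∑ y, w z y := by
    intro z hz
    have hzne := ne_a_of_mem_cutSet ht hu_ne_a hz
    have heq := hH z hzne
    have expand : ∑ y, w z y * (Hf z - Hf y)
        = (∑ y, w z y) * Hf z - ∑ y, w z y * Hf y := by
      rw [Finset.sum_mul]
      rw [← Finset.sum_sub_distrib]
      apply Finset.sum_congr rfl
      intro y _
      ring
    rw [expand]
    linarith
  have total : ∑ z ∈ S, ∑ y, w z y * (Hf z - Hf y) = ∑ z ∈ S, ∑ y, w z y :=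
    Finset.sum_congr rfl key
  have split1 : ∀ (g : V → V → ℝ), ∑ z ∈ S, ∑ y, g z y
      = (∑ z ∈ S, ∑ y ∈ S, g z y) + ∑ z ∈ S, ∑ y ∈ Sᶜ, g z y := by
    intro g
    rw [← Finset.sum_add_distrib]
    apply Finset.sum_congr rfl
    intro z _
    rw [Finset.sum_add_sum_compl]
  rw [split1, split1] at total
  have anti : ∑ z ∈ S, ∑ y ∈ S, w z y * (Hf z - Hf y) = 0 := by
    have h2 : ∑ z ∈ S, ∑ y ∈ S, w z y * (Hf z - Hf y)
        = - ∑ z ∈ S, ∑ y ∈ S, w z y * (Hf z - Hf y) := by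
      nth_rewrite 1 [Finset.sum_comm]
      rw [← Finset.sum_neg_distrib]
      apply Finset.sum_congr rfl
      intro z _
      rw [← Finset.sum_neg_distrib]
      apply Finset.sum_congr rfl
      intro y _
      rw [hw_symm y z]
      ring
    linarith
  have cross1 : ∑ z ∈ S, ∑ y ∈ Sᶜ, w z y * (Hf z - Hf y) = w u v * (Hf u - Hf v) := by
    rw [← Finset.sum_product']
    apply Finset.sum_eq_single_of_mem (u, v)
    · rw [Finset.mem_product]
      exact ⟨self_mem_cutSet ht a u, Finset.mem_compl.mpr (v_not_mem_cutSet ht huv eu)⟩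
    · rintro ⟨z, y⟩ hzy hne
      rw [Finset.mem_product, Finset.mem_compl] at hzy
      by_cases hadj : T.Adj z y
      · obtain ⟨rfl, rfl⟩ := crossing ht huv eu hzy.1 hzy.2 hadj
        exact absurd rfl hne
      · rw [hw_zero z y hadj]; ring
  have cross2 : ∑ z ∈ S, ∑ y ∈ Sᶜ, w z y = w u v := by
    rw [← Finset.sum_product']
    apply Finset.sum_eq_single_of_mem (u, v)
    · rw [Finset.mem_product]
      exact ⟨self_mem_cutSet ht a u, Finset.mem_compl.mpr (v_not_mem_cutSet ht huv eu)⟩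
    · rintro ⟨z, y⟩ hzy hne
      rw [Finset.mem_product, Finset.mem_compl] at hzy
      by_cases hadj : T.Adj z y
      · obtain ⟨rfl, rfl⟩ := crossing ht huv eu hzy.1 hzy.2 hadj
        exact absurd rfl hne
      · exact hw_zero z y hadj
  rw [anti, cross1, cross2] at total
  linarith

lemma ratio_aux (ht : T.IsTree) {a : V} (w : V → V → ℝ) (τ : ℝ)
    (hw_symm : ∀ x y, w x y = w y x)
    (hτ : ∀ x y z, T.Adj x y → T.Adj x z → w x y ≤ τ * w x z)
    (hτ0 : 0 ≤ τ)
    {u v : V} (huv : T.Adj u v)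
    (eu : pathTo ht a u = Walk.cons huv (pathTo ht a v)) :
    ∀ (N : ℕ) (z y : V) (h : T.Adj z y),
      pathTo ht a z = Walk.cons h (pathTo ht a y) →
      z ∈ cutSet ht a u → y ∈ cutSet ht a u → depth ht a z ≤ N →
      w z y ≤ τ ^ (depth ht a z - depth ht a u) * w u v := by
  have hu_ne_a : u ≠ a := by
    intro h
    have := depth_parent ht huv eu
    rw [h, depth_self] at this
    omega
  intro N
  induction N with
  | zero =>
    intro z y h e hz hy hd
    have := depth_parent ht h e
    omega
  | succ N ih =>
    intro z y h e hz hy hdN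
    have hdz := depth_parent ht h e
    have hzu : z ≠ u := by
      rintro rfl
      exact (v_not_mem_cutSet ht huv eu) (parent_unique ht h huv e eu ▸ hy)
    have hdzu : depth ht a u ≤ depth ht a z := depth_le_of_mem_cutSet ht hz
    have hdzu' : depth ht a u ≠ depth ht a z := by
      intro hh
      exact hzu (eq_of_mem_cutSet_depth_eq ht hz hh)
    have hdyu : depth ht a u ≤ depth ht a y := depth_le_of_mem_cutSet ht hy
    by_cases hyu : y = u
    · have hdz' : depth ht a z = depth ht a u + 1 := by rw [← hyu]; omega
      have hexp : depth ht a z - depth ht a u = 1 := by omega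
      rw [hexp, pow_one, hw_symm z y, hyu]
      exact hτ u z v (hyu ▸ h.symm) huv
    · obtain ⟨t, h2, e2⟩ := exists_parent ht (ne_a_of_mem_cutSet ht hu_ne_a hy)
      have hty : t ∈ cutSet ht a u := parent_mem_cutSet ht h2 e2 hy hyu
      have ihy := ih y t h2 e2 hy hty (by omega)
      have s1 : w y z ≤ τ * w y t := hτ y z t h.symm h2
      have s2 : τ * w y t ≤ τ * (τ ^ (depth ht a y - depth ht a u) * w u v) :=
        mul_le_mul_of_nonneg_left ihy hτ0
      have hexp : depth ht a z - depth ht a u = (depth ht a y - depth ht a u) + 1 := by omega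
      rw [hw_symm z y, hexp, pow_succ]
      calc w y z ≤ τ * (τ ^ (depth ht a y - depth ht a u) * w u v) := le_trans s1 s2
        _ = τ ^ (depth ht a y - depth ht a u) * τ * w u v := by ring

lemma ratio (ht : T.IsTree) {a : V} (w : V → V → ℝ) (τ : ℝ)
    (hw_symm : ∀ x y, w x y = w y x)
    (hτ : ∀ x y z, T.Adj x y → T.Adj x z → w x y ≤ τ * w x z)
    (hτ0 : 0 ≤ τ)
    {u v : V} (huv : T.Adj u v)
    (eu : pathTo ht a u = Walk.cons huv (pathTo ht a v))
    {z y : V} (hadj : T.Adj z y)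
    (hz : z ∈ cutSet ht a u) (hy : y ∈ cutSet ht a u) :
    w z y ≤ τ ^ (max (depth ht a z) (depth ht a y) - depth ht a u) * w u v := by
  rcases adj_parent ht a hadj with e | e
  · have hd := depth_parent ht hadj e
    have hmax : max (depth ht a z) (depth ht a y) = depth ht a z := by omega
    rw [hmax]
    exact ratio_aux ht w τ hw_symm hτ hτ0 huv eu (depth ht a z) z y hadj e hz hy le_rfl
  · have hd := depth_parent ht hadj.symm e
    have hmax : max (depth ht a z) (depth ht a y) = depth ht a y := by omega
    rw [hmax, hw_symm z y]
    exact ratio_aux ht w τ hw_symm hτ hτ0 huv eu (depth ht a y) y z hadj.symm e hy hz le_rfl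
end TreeHit

/-- `IsWeightedHittingTime G w a H` : `H` satisfies the linear system characterizing the
expected hitting times of the absorbing vertex `a` for the random walk on `G` generated
by the edge-weight function `w` (transition probabilities `p_{xy} = w x y / ∑_z w x z`). -/
def IsWeightedHittingTime {V : Type*} [Fintype V] (G : SimpleGraph V)
    (w : V → V → ℝ) (a : V) (H : V → ℝ) : Prop :=
  H a = 0 ∧ ∀ x, x ≠ a →
    (∑ y, w x y) * H x = (∑ y, w x y) + ∑ y, w x y * H y

/-- `F t m = ∑_{k=0}^{m−1} c_k t^k` with `c_0 = m` and `c_k = 2(m−k)` for `1 ≤ k ≤ m−1`. -/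
noncomputable def F (t : ℝ) (m : ℕ) : ℝ :=
  ∑ k ∈ Finset.range m, (if k = 0 then (m : ℝ) else 2 * ((m : ℝ) - (k : ℝ))) * t ^ k

section Main

open TreeHit SimpleGraph Finset Walk

/-- For any random walk on a finite tree `T` with `m` edges generated by an edge-weight
function with asymmetry at most `τ`, every hitting time satisfies `H(x,a) ≤ F(τ, m)`. -/
theorem tree_weighted_max_hitting_le {V : Type*} [Fintype V] [DecidableEq V]
    (T : SimpleGraph V) [DecidableRel T.Adj] (htree : T.IsTree)
    (m : ℕ) (hm : m = T.edgeFinset.card)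
    (w : V → V → ℝ)
    (hw_symm : ∀ x y, w x y = w y x)
    (hw_pos : ∀ x y, T.Adj x y → 0 < w x y)
    (hw_zero : ∀ x y, ¬ T.Adj x y → w x y = 0)
    (τ : ℝ) (hτ : ∀ x y z, T.Adj x y → T.Adj x z → w x y ≤ τ * w x z)
    (a : V) (H : V → ℝ) (hH : IsWeightedHittingTime T w a H) (x : V) :
    H x ≤ F τ m := by
  classical
  obtain ⟨hHa, hHeq⟩ := hH
  by_cases hxa : x = a
  · -- trivial case: H a = 0 ≤ F τ m
    subst hxa
    rw [hHa]
    unfold F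
    apply Finset.sum_nonneg
    intro k hk
    rw [Finset.mem_range] at hk
    have hm1 : 1 ≤ m := by omega
    have hτ1 : 1 ≤ τ := by
      have hne : T.edgeFinset.Nonempty := by
        rw [← Finset.card_pos, ← hm]; omega
      obtain ⟨e, he⟩ := hne
      induction e using Sym2.ind with
      | _ p q =>
        have hadj : T.Adj p q := mem_edgeFinset.mp he
        have h1 := hτ p q q hadj hadj
        have h2 := hw_pos p q hadj
        nlinarith
    have h1 : (0:ℝ) ≤ τ ^ k := pow_nonneg (by linarith) k
    have h2 : (0:ℝ) ≤ (if k = 0 then (m:ℝ) else 2*((m:ℝ)-(k:ℝ))) := by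
      split
      · positivity
      · have : (k:ℝ) < m := by exact_mod_cast hk
        linarith
    exact mul_nonneg h2 h1
  · -- main case
    obtain ⟨px, hpx, epx⟩ := exists_parent htree hxa
    have hτ1 : 1 ≤ τ := by
      have h1 := hτ x px px hpx hpx
      have h2 := hw_pos x px hpx
      nlinarith
    have hτ0 : (0:ℝ) ≤ τ := by linarith
    set P : T.Walk x a := pathTo htree a x with hP
    have hdepth_pos : 1 ≤ depth htree a x := by
      by_contra hcon
      push_neg at hcon
      exact hxa (eq_of_depth_eq_zero htree (by omega))
    have hm1 : 1 ≤ m := by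
      have h2 := depth_le_card_edgeFinset htree a x
      omega
    set B : V → ℝ := fun u => ∑ z, ∑ y,
      if z ∈ cutSet htree a u ∧ y ∈ cutSet htree a u ∧ T.Adj z y
      then τ ^ (max (depth htree a z) (depth htree a y) - depth htree a u)
      else 0 with hBdef
    -- the per-dart bound
    have hdart : ∀ d ∈ P.darts, H d.fst - H d.snd ≤ 1 + B d.fst := by
      intro d hd
      have e := darts_parent htree a x d hd
      have hid := cut_identity htree w H hHeq hw_symm hw_zero d.adj e
      have hwpos := hw_pos d.fst d.snd d.adj
      have hBu : B d.fst = ∑ z ∈ cutSet htree a d.fst, ∑ y ∈ cutSet htree a d.fst,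
          (if T.Adj z y then
            τ ^ (max (depth htree a z) (depth htree a y) - depth htree a d.fst) else 0) := by
        have step : ∀ (g : V → ℝ), (∑ z ∈ cutSet htree a d.fst, g z)
            = ∑ z, if z ∈ cutSet htree a d.fst then g z else 0 := by
          intro g; rw [Finset.sum_ite_mem, Finset.univ_inter]
        rw [step]
        simp only [hBdef]
        apply Finset.sum_congr rfl
        intro z _
        by_cases hz : z ∈ cutSet htree a d.fst
        · simp only [hz, if_true, true_and]
          rw [step]
          apply Finset.sum_congr rfl
          intro y _
          by_cases hy : y ∈ cutSet htree a d.fst <;> simp [hy]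
        · simp [hz]
      have hA : (∑ z ∈ cutSet htree a d.fst, ∑ y ∈ cutSet htree a d.fst, w z y)
          ≤ B d.fst * w d.fst d.snd := by
        rw [hBu, Finset.sum_mul]
        apply Finset.sum_le_sum
        intro z hz
        rw [Finset.sum_mul]
        apply Finset.sum_le_sum
        intro y hy
        by_cases hadj : T.Adj z y
        · rw [if_pos hadj]
          exact ratio htree w τ hw_symm hτ hτ0 d.adj e hadj hz hy
        · rw [if_neg hadj, hw_zero z y hadj, zero_mul]
      have hmul : w d.fst d.snd * (H d.fst - H d.snd)
          ≤ w d.fst d.snd * (1 + B d.fst) := by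
        rw [hid]
        nlinarith [hA]
      exact le_of_mul_le_mul_left hmul hwpos
    -- telescoping
    have htele := telescope H P
    rw [hHa, sub_zero] at htele
    have hsum1 : (P.darts.map (fun d => H d.fst - H d.snd)).sum
        ≤ (P.darts.map (fun d => 1 + B d.fst)).sum :=
      List.sum_le_sum hdart
    have hsplit : ∀ (l : List T.Dart),
        (l.map (fun d => 1 + B d.fst)).sum = l.length + (l.map (fun d => B d.fst)).sum := by
      intro l
      induction l with
      | nil => simp
      | cons h t ih => simp [ih]; ring
    have hlen : (P.length : ℝ) ≤ m := by
      have : P.length = depth htree a x := rfl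
      rw [this]
      exact_mod_cast hm ▸ depth_le_card_edgeFinset htree a x
    have hnd : P.darts.Nodup :=
      Walk.darts_nodup_of_support_nodup (pathTo_isPath htree a x).support_nodup
    have hfin : (P.darts.map (fun d => B d.fst)).sum = ∑ d ∈ P.darts.toFinset, B d.fst :=
      (List.sum_toFinset _ hnd).symm
    -- triple sum machinery
    set Dset : Finset T.Dart := P.darts.toFinset with hDset
    set key : T.Dart × (V × V) → ℕ :=
      fun q => max (depth htree a q.2.1) (depth htree a q.2.2) - depth htree a q.1.fst
      with hkey
    set Q : Finset (T.Dart × (V × V)) :=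
      (Dset ×ˢ (Finset.univ ×ˢ Finset.univ)).filter
        (fun q => q.2.1 ∈ cutSet htree a q.1.fst ∧ q.2.2 ∈ cutSet htree a q.1.fst
          ∧ T.Adj q.2.1 q.2.2) with hQ
    have hQsum : ∑ d ∈ Dset, B d.fst = ∑ q ∈ Q, τ ^ key q := by
      rw [hQ, Finset.sum_filter, Finset.sum_product]
      apply Finset.sum_congr rfl
      intro d _
      rw [Finset.sum_product]
    -- facts about elements of Q
    have hQfacts : ∀ q ∈ Q, q.1 ∈ P.darts ∧ q.2.1 ∈ cutSet htree a q.1.fst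
        ∧ q.2.2 ∈ cutSet htree a q.1.fst ∧ T.Adj q.2.1 q.2.2
        ∧ 1 ≤ depth htree a q.1.fst := by
      intro q hq
      rw [hQ, Finset.mem_filter] at hq
      obtain ⟨hmem, h1, h2, h3⟩ := hq
      rw [Finset.mem_product] at hmem
      have hd : q.1 ∈ P.darts := by
        rw [hDset] at hmem
        exact List.mem_toFinset.mp hmem.1
      have e := darts_parent htree a x q.1 hd
      have := depth_parent htree q.1.adj e
      exact ⟨hd, h1, h2, h3, by omega⟩
    have hkey_facts : ∀ q ∈ Q, 1 ≤ key q ∧ key q < m := by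
      intro q hq
      obtain ⟨hd, h1, h2, h3, hdu⟩ := hQfacts q hq
      have hz1 : depth htree a q.1.fst ≤ depth htree a q.2.1 := depth_le_of_mem_cutSet htree h1
      have hz2 : depth htree a q.1.fst ≤ depth htree a q.2.2 := depth_le_of_mem_cutSet htree h2
      have hne : ¬ (depth htree a q.1.fst = depth htree a q.2.1
            ∧ depth htree a q.1.fst = depth htree a q.2.2) := by
        rintro ⟨e1, e2⟩
        have r1 := eq_of_mem_cutSet_depth_eq htree h1 e1
        have r2 := eq_of_mem_cutSet_depth_eq htree h2 e2
        rw [r1, r2] at h3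
        exact T.irrefl h3
      have hb1 : depth htree a q.2.1 ≤ m := hm ▸ depth_le_card_edgeFinset htree a q.2.1
      have hb2 : depth htree a q.2.2 ≤ m := hm ▸ depth_le_card_edgeFinset htree a q.2.2
      rw [hkey]
      constructor
      · simp only []
        omega
      · simp only []
        omega
    -- the fiber cardinality bound
    have hfiber_nat : ∀ b, 1 ≤ b → b < m →
        (Q.filter (fun q => key q = b)).card ≤ 2 * (m - b) := by
      intro b hb1 hbm
      set Rb : Finset (V × V) := (Finset.univ ×ˢ Finset.univ).filter
        (fun zy => T.Adj zy.1 zy.2 ∧ b ≤ depth htree a zy.1 ∧ b ≤ depth htree a zy.2)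
        with hRb
      have step1 : (Q.filter (fun q => key q = b)).card ≤ Rb.card := by
        apply Finset.card_le_card_of_injOn (fun q => q.2)
        · intro q hq
          rw [Finset.mem_coe, Finset.mem_filter] at hq
          obtain ⟨hqQ, hkeyq⟩ := hq
          obtain ⟨hd, h1, h2, h3, hdu⟩ := hQfacts q hqQ
          have hz1 : depth htree a q.1.fst ≤ depth htree a q.2.1 :=
            depth_le_of_mem_cutSet htree h1
          have hz2 : depth htree a q.1.fst ≤ depth htree a q.2.2 :=
            depth_le_of_mem_cutSet htree h2
          have hdadj := adj_depth htree a h3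
          rw [hkey] at hkeyq
          simp only [] at hkeyq
          rw [Finset.mem_coe, hRb, Finset.mem_filter]
          beta_reduce
          refine ⟨by simp, h3, by omega, by omega⟩
        · intro q hq q' hq' heq
          simp only [Finset.mem_coe, Finset.mem_filter] at hq hq'
          obtain ⟨hqQ, hkeyq⟩ := hq
          obtain ⟨hqQ', hkeyq'⟩ := hq'
          obtain ⟨hd, h1, h2, h3, hdu⟩ := hQfacts q hqQ
          obtain ⟨hd', h1', h2', h3', hdu'⟩ := hQfacts q' hqQ'
          have hz1 : depth htree a q.1.fst ≤ depth htree a q.2.1 :=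
            depth_le_of_mem_cutSet htree h1
          have hz1' : depth htree a q'.1.fst ≤ depth htree a q'.2.1 :=
            depth_le_of_mem_cutSet htree h1'
          rw [hkey] at hkeyq hkeyq'
          simp only [] at hkeyq hkeyq'
          have heq' : q.2 = q'.2 := heq
          have heq1 : q.2.1 = q'.2.1 := by rw [heq']
          have heq2 : q.2.2 = q'.2.2 := by rw [heq']
          have hdeq : depth htree a q.1.fst = depth htree a q'.1.fst := by
            rw [heq1, heq2] at hkeyq
            omega
          have hsupp : q.1.fst ∈ (pathTo htree a q.2.1).support :=
            (mem_cutSet htree a _ _).mp h1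
          have hsupp' : q'.1.fst ∈ (pathTo htree a q.2.1).support := by
            rw [heq1]
            exact (mem_cutSet htree a _ _).mp h1'
          have hfst : q.1.fst = q'.1.fst :=
            depth_inj_on_support htree a q.2.1 _ _ hsupp hsupp' hdeq
          have hdart_eq : q.1 = q'.1 := dart_eq_of_fst_eq htree a x hd hd' hfst
          exact Prod.ext hdart_eq heq'

      have step2 : Rb.card ≤ 2 * (m - b) := by
        have hfib : ∀ e ∈ Rb.image (fun zy : V × V => s(zy.1, zy.2)),
            (Rb.filter (fun zy => s(zy.1, zy.2) = e)).card ≤ 2 := by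
          intro e he
          obtain ⟨zy, _, rfl⟩ := Finset.mem_image.mp he
          have hsub : Rb.filter (fun p => s(p.1, p.2) = s(zy.1, zy.2))
              ⊆ {zy, (zy.2, zy.1)} := by
            intro p hp
            rw [Finset.mem_filter] at hp
            rw [Sym2.eq_iff] at hp
            rcases hp.2 with ⟨e1, e2⟩ | ⟨e1, e2⟩
            · apply Finset.mem_insert.mpr
              left
              exact Prod.ext e1 e2
            · apply Finset.mem_insert.mpr
              right
              rw [Finset.mem_singleton]
              exact Prod.ext e1 e2
          calc (Rb.filter (fun p => s(p.1, p.2) = s(zy.1, zy.2))).card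
              ≤ ({zy, (zy.2, zy.1)} : Finset (V × V)).card := Finset.card_le_card hsub
            _ ≤ 2 := by
              apply le_trans (Finset.card_insert_le _ _)
              simp
        have h2 : Rb.card ≤ 2 * (Rb.image (fun zy : V × V => s(zy.1, zy.2))).card :=
          Finset.card_le_mul_card_image Rb 2 hfib
        have himage : Rb.image (fun zy : V × V => s(zy.1, zy.2))
            ⊆ T.edgeFinset.filter (fun e => b ≤ minD htree a e) := by
          intro e he
          obtain ⟨zy, hzy, rfl⟩ := Finset.mem_image.mp he
          rw [hRb, Finset.mem_filter] at hzy
          obtain ⟨-, hadj, hb1', hb2'⟩ := hzy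
          rw [Finset.mem_filter]
          refine ⟨mem_edgeFinset.mpr hadj, ?_⟩
          rw [minD_mk]
          omega
        by_cases hne : (Rb.image (fun zy : V × V => s(zy.1, zy.2))).Nonempty
        · obtain ⟨e, he⟩ := hne
          have hEne : (T.edgeFinset.filter (fun e => b ≤ minD htree a e)).Nonempty :=
            ⟨e, himage he⟩
          have hE := card_filter_minD htree a b hEne
          have h3 : (Rb.image (fun zy : V × V => s(zy.1, zy.2))).card
              ≤ (T.edgeFinset.filter (fun e => b ≤ minD htree a e)).card :=
            Finset.card_le_card himage
          omega
        · rw [Finset.not_nonempty_iff_eq_empty] at hne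
          have hzero : Rb.card = 0 := by
            have himgzero : (Rb.image (fun zy : V × V => s(zy.1, zy.2))).card = 0 := by
              rw [hne]; rfl
            omega
          omega
      omega
    -- put the counting together
    have hcount : ∑ q ∈ Q, τ ^ key q
        ≤ ∑ b ∈ Finset.Ico 1 m, 2 * ((m:ℝ) - b) * τ ^ b := by
      rw [Finset.sum_comp (fun b => τ ^ b) key]
      have hstep : ∀ b ∈ Q.image key,
          ((Q.filter (fun q => key q = b)).card • τ ^ b : ℝ)
            ≤ 2 * ((m:ℝ) - b) * τ ^ b := by
        intro b hb
        obtain ⟨q, hq, rfl⟩ := Finset.mem_image.mp hb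
        obtain ⟨hb1, hbm⟩ := hkey_facts q hq
        rw [nsmul_eq_mul]
        apply mul_le_mul_of_nonneg_right _ (pow_nonneg hτ0 _)
        have hc := hfiber_nat (key q) hb1 hbm
        calc ((Q.filter (fun q' => key q' = key q)).card : ℝ)
            ≤ ((2 * (m - key q) : ℕ) : ℝ) := by exact_mod_cast hc
          _ = 2 * ((m:ℝ) - key q) := by
              push_cast [Nat.cast_sub (le_of_lt hbm)]
              ring
      calc ∑ b ∈ Q.image key, (Q.filter (fun q => key q = b)).card • τ ^ b
          ≤ ∑ b ∈ Q.image key, 2 * ((m:ℝ) - b) * τ ^ b := Finset.sum_le_sum hstep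
        _ ≤ ∑ b ∈ Finset.Ico 1 m, 2 * ((m:ℝ) - b) * τ ^ b := by
            apply Finset.sum_le_sum_of_subset_of_nonneg
            · intro b hb
              obtain ⟨q, hq, rfl⟩ := Finset.mem_image.mp hb
              obtain ⟨hb1, hbm⟩ := hkey_facts q hq
              rw [Finset.mem_Ico]
              exact ⟨hb1, hbm⟩
            · intro b hb _
              rw [Finset.mem_Ico] at hb
              have : (b:ℝ) < m := by exact_mod_cast hb.2
              have h0 : (0:ℝ) ≤ 2 * ((m:ℝ) - b) := by linarith
              exact mul_nonneg h0 (pow_nonneg hτ0 _)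
    -- F expansion
    have hF : F τ m = (m:ℝ) + ∑ b ∈ Finset.Ico 1 m, 2 * ((m:ℝ) - b) * τ ^ b := by
      unfold F
      rw [Finset.range_eq_Ico, Finset.sum_eq_sum_Ico_succ_bot (by omega : 0 < m)]
      simp only [if_pos rfl, pow_zero, mul_one, zero_add]
      congr 1
      apply Finset.sum_congr rfl
      intro k hk
      rw [Finset.mem_Ico] at hk
      rw [if_neg (by omega)]
    -- final chain
    have final : H x ≤ (P.length : ℝ) + ∑ q ∈ Q, τ ^ key q := by
      calc H x = (P.darts.map (fun d => H d.fst - H d.snd)).sum := htele.symm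
        _ ≤ (P.darts.map (fun d => 1 + B d.fst)).sum := hsum1
        _ = P.darts.length + (P.darts.map (fun d => B d.fst)).sum := hsplit P.darts
        _ = (P.length : ℝ) + ∑ d ∈ Dset, B d.fst := by
            rw [Walk.length_darts, hfin]
        _ = (P.length : ℝ) + ∑ q ∈ Q, τ ^ key q := by rw [hQsum]
    rw [hF]
    have := hcount
    linarith

end Main
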